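/- Let γ > 0, λ > 0, δ ∈ (0,1), and d ≥ 1 an integer. Let x̂ be the unique positive fixed point of F(x) = λ/(γ+x)^d (i.e., x̂(γ+x̂)^d = λ). Then d·x̂/(γ+x̂) ≤ 1-δ holds if and only if λ ≤ (1-δ)·d^d·γ^{d+1}/(d-1+δ)^{d+1}. -/

import Mathlib

/-- hardcore (β = 0) uniqueness criterion.  If `x̂` is the unique
positive fixed point of `F(x) = λ/(γ+x)^d`, then `d·x̂/(γ+x̂) ≤ 1-δ` iff
`λ ≤ (1-δ)·d^d·γ^{d+1}/(d-1+δ)^{d+1}`. -/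
theorem hardcore_uniqueness_iff (γ lam δ : ℝ) (d : ℕ)
    (hγ : 0 < γ) (hlam : 0 < lam) (hδ : δ ∈ Set.Ioo (0:ℝ) 1) (hd : 1 ≤ d)
    (x : ℝ) (hx : 0 < x) (hfix : x * (γ + x) ^ d = lam) :
    (d : ℝ) * x / (γ + x) ≤ 1 - δ ↔
      lam ≤ (1 - δ) * (d : ℝ) ^ d * γ ^ (d + 1) / ((d : ℝ) - 1 + δ) ^ (d + 1) := by
  obtain ⟨hδ0, hδ1⟩ := hδ
  have hd1 : (1:ℝ) ≤ (d:ℝ) := by exact_mod_cast hd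
  have hc : 0 < (d:ℝ) - 1 + δ := by linarith
  set c : ℝ := (d:ℝ) - 1 + δ with hcdef
  set x' : ℝ := (1 - δ) * γ / c with hx'def
  have hx'pos : 0 < x' := by
    apply div_pos (by nlinarith) hc
  -- the RHS bound equals x' * (γ + x') ^ d
  have hsum : γ + x' = γ * (d:ℝ) / c := by
    field_simp [hx'def]
    rw [hx'def, add_mul, div_mul_cancel₀ _ hc.ne', hcdef]
    ring
  have hrhs : (1 - δ) * (d : ℝ) ^ d * γ ^ (d + 1) / c ^ (d + 1)
      = x' * (γ + x') ^ d := by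
    rw [hsum, hx'def, div_pow, div_mul_div_comm, mul_pow]
    rw [div_eq_div_iff (by positivity) (by positivity)]
    ring
  -- strict monotonicity of t ↦ t * (γ + t)^d
  have mono : ∀ a b : ℝ, 0 ≤ a → a < b → a * (γ + a) ^ d < b * (γ + b) ^ d := by
    intro a b ha hab
    have h1 : (γ + a) ^ d ≤ (γ + b) ^ d :=
      pow_le_pow_left₀ (by linarith) (by linarith) d
    have hpos : 0 < (γ + b) ^ d := pow_pos (by linarith) d
    calc a * (γ + a) ^ d ≤ a * (γ + b) ^ d := by
          exact mul_le_mul_of_nonneg_left h1 ha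
      _ < b * (γ + b) ^ d := mul_lt_mul_of_pos_right hab hpos
  have key : x ≤ x' ↔ x * (γ + x) ^ d ≤ x' * (γ + x') ^ d := by
    constructor
    · intro h
      rcases eq_or_lt_of_le h with h' | h'
      · rw [h']
      · exact (mono x x' hx.le h').le
    · intro h
      by_contra hcon
      push_neg at hcon
      exact absurd h (not_le.mpr (mono x' x hx'pos.le hcon))
  have hstep1 : (d : ℝ) * x / (γ + x) ≤ 1 - δ ↔ x ≤ x' := by
    rw [div_le_iff₀ (by linarith : 0 < γ + x), hx'def, le_div_iff₀ hc]
    constructor <;> intro h <;> nlinarith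
  rw [hstep1, ← hfix, hrhs]
  exact key
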